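/- Let z₁, …, z_m be pairwise distinct complex numbers with |z_j| = 1 for all j, and let c₁, …, c_m ∈ ℂ. If the sequence n ↦ ∑_{j=1}^m c_j · z_j^n tends to 0 as n → ∞ (n ranging over natural numbers), then c_j = 0 for every j. -/

import Mathlib

open Filter Finset

/-- If `z₁, …, z_m` are pairwise distinct unimodular complex numbers and
`∑ j, c_j·z_j^n → 0` as `n → ∞`, then all `c_j` vanish. -/
theorem unimodular_exponentials_independent (m : ℕ) (z : Fin m → ℂ)
    (hz : Function.Injective z) (hz1 : ∀ j, ‖z j‖ = 1) (c : Fin m → ℂ)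
    (h : Filter.Tendsto (fun n : ℕ => ∑ j, c j * z j ^ n) Filter.atTop (nhds 0)) :
    ∀ j, c j = 0 := by
  intro k
  set w : Fin m → ℂ := fun j => z j * (starRingEnd ℂ) (z k) with hwdef
  have hzk0 : z k ≠ 0 := by
    intro h0
    have := hz1 k
    rw [h0, norm_zero] at this
    norm_num at this
  have hwk : w k = 1 := by
    simp only [hwdef, Complex.mul_conj]
    rw [Complex.normSq_eq_norm_sq, hz1 k]
    norm_num
  have hwnorm : ∀ j, ‖w j‖ = 1 := by
    intro j
    simp only [hwdef, norm_mul, RCLike.norm_conj, hz1]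
    ring
  have hwne : ∀ j, j ≠ k → w j ≠ 1 := by
    intro j hjk h1
    apply hjk
    apply hz
    have hck : (starRingEnd ℂ) (z k) ≠ 0 := by
      intro h0
      rw [hwdef] at h1
      simp only [h0, mul_zero] at h1
      exact one_ne_zero h1.symm
    have hww : w j = w k := by rw [h1, hwk]
    exact mul_right_cancel₀ hck hww
  -- the twisted sequence tends to 0
  set u : ℕ → ℂ := fun n => ((starRingEnd ℂ) (z k)) ^ n * ∑ j, c j * z j ^ n with hudef
  have hu : Tendsto u atTop (nhds 0) := by
    rw [tendsto_zero_iff_norm_tendsto_zero]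
    have : (fun n => ‖u n‖) = fun n => ‖∑ j, c j * z j ^ n‖ := by
      funext n
      simp only [hudef, norm_mul, norm_pow, RCLike.norm_conj, hz1 k, one_pow, one_mul]
    rw [this]
    exact tendsto_zero_iff_norm_tendsto_zero.mp h
  -- Cesàro averages
  have h0 : Tendsto (fun N : ℕ => (N : ℝ)⁻¹ • ∑ n ∈ range N, u n) atTop (nhds 0) :=
    hu.cesaro_smul
  -- rewrite the Cesàro average
  have hu' : ∀ n, u n = ∑ j, c j * w j ^ n := by
    intro n
    simp only [hudef, hwdef, Finset.mul_sum]
    apply Finset.sum_congr rfl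
    intro j _
    rw [mul_pow]
    ring
  have hrw : ∀ N : ℕ, (N : ℝ)⁻¹ • ∑ n ∈ range N, u n
      = ∑ j, (N : ℝ)⁻¹ • (c j * ∑ n ∈ range N, w j ^ n) := by
    intro N
    rw [← Finset.smul_sum]
    congr 1
    simp only [hu']
    rw [Finset.sum_comm]
    apply Finset.sum_congr rfl
    intro j _
    rw [Finset.mul_sum]
  -- each term in the rewritten sum converges
  have hterm : ∀ j : Fin m, Tendsto (fun N : ℕ => (N : ℝ)⁻¹ • (c j * ∑ n ∈ range N, w j ^ n))
      atTop (nhds (if j = k then c k else 0)) := by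
    intro j
    by_cases hjk : j = k
    · subst hjk
      simp only [if_pos rfl, hwk, one_pow, Finset.sum_const, Finset.card_range, nsmul_eq_mul,
        mul_one]
      apply Tendsto.congr' _ (tendsto_const_nhds (x := c j))
      filter_upwards [eventually_ge_atTop 1] with N hN
      have hN0 : (N : ℝ) ≠ 0 := by positivity
      rw [Complex.real_smul]
      push_cast
      have hNC : (N : ℂ) ≠ 0 := Nat.cast_ne_zero.mpr (by omega)
      field_simp
    · rw [if_neg hjk]
      have hw1 : w j ≠ 1 := hwne j hjk
      have hden : (0 : ℝ) < ‖w j - 1‖ := by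
        rw [norm_pos_iff]
        exact sub_ne_zero.mpr hw1
      apply squeeze_zero_norm (a := fun N : ℕ => (N : ℝ)⁻¹ * (‖c j‖ * (2 / ‖w j - 1‖)))
      · intro N
        rw [norm_smul, norm_inv, Real.norm_natCast, norm_mul]
        apply mul_le_mul_of_nonneg_left _ (by positivity)
        apply mul_le_mul_of_nonneg_left _ (norm_nonneg _)
        rw [geom_sum_eq hw1, norm_div]
        rw [div_le_div_iff_of_pos_right hden]
        calc ‖w j ^ N - 1‖ ≤ ‖w j ^ N‖ + ‖(1 : ℂ)‖ := norm_sub_le _ _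
          _ = 2 := by rw [norm_pow, hwnorm j, one_pow, norm_one]; norm_num
      · have h1 : Tendsto (fun N : ℕ => (N : ℝ)⁻¹) atTop (nhds 0) :=
          tendsto_inv_atTop_zero.comp tendsto_natCast_atTop_atTop
        simpa using h1.mul_const (‖c j‖ * (2 / ‖w j - 1‖))
  have hA : Tendsto (fun N : ℕ => (N : ℝ)⁻¹ • ∑ n ∈ range N, u n) atTop (nhds (c k)) := by
    have := tendsto_finset_sum Finset.univ (fun j _ => hterm j)
    simp only [Finset.sum_ite_eq' Finset.univ k, Finset.mem_univ, if_pos] at this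
    exact (Tendsto.congr (fun N => (hrw N).symm) this)
  have := tendsto_nhds_unique hA h0
  exact this
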